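/- With notation as above, if additionally (v,w) = ε·(w,v) for a fixed sign ε and all v,w (ε = ±1), then [v₁,v₂]' = ε·ω(-1)·[v₂,v₁]' for all v₁, v₂. -/
import Mathlib

theorem stmt_18 (G : Type*) [Group G] (lam : G →* ℂˣ) (ω : ℂˣ →* ℂˣ)
    (V : Type*) [AddCommGroup V] [Module ℂ V] (π : Representation ℂ G V)
    (w₀ : G) (hw₀ : w₀ * w₀ = 1) (hlamw₀ : lam w₀ = -1)
    (B : V →ₗ[ℂ] V →ₗ[ℂ] ℂ)
    (hB : ∀ (g : G) (v w : V), B (π g v) (π g w) = (ω (lam g) : ℂ) * B v w)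
    (ε : ℂ) (hε2 : ε ^ 2 = 1) (hsym : ∀ v w : V, B v w = ε * B w v) :
    ∀ v₁ v₂ : V,
      B v₁ (π w₀⁻¹ v₂) = ε * (ω (-1) : ℂ) * B v₂ (π w₀⁻¹ v₁) := by
  intro v₁ v₂
  have hinv : w₀⁻¹ = w₀ := by
    rw [inv_eq_iff_mul_eq_one, hw₀]
  have hfix : ∀ v : V, π w₀ (π w₀ v) = v := by
    intro v
    have := π.map_mul w₀ w₀
    rw [hw₀, map_one] at this
    calc π w₀ (π w₀ v) = (π w₀ * π w₀) v := rfl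
      _ = v := by rw [← this]; rfl
  calc B v₁ (π w₀⁻¹ v₂) = ε * B (π w₀ v₂) v₁ := by rw [hsym, hinv]
    _ = ε * B (π w₀ v₂) (π w₀ (π w₀ v₁)) := by rw [hfix]
    _ = ε * ((ω (lam w₀) : ℂ) * B v₂ (π w₀ v₁)) := by rw [hB]
    _ = ε * (ω (-1) : ℂ) * B v₂ (π w₀⁻¹ v₁) := by rw [hlamw₀, hinv, mul_assoc]
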